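/- Let T be a pretriangulated category admitting countable coproducts, let φₙ : Xₙ → Xₙ₊₁ (n ∈ ℕ) be a sequence of morphisms in T, and let X be an object fitting into a distinguished triangle ∐ₙ Xₙ →(1−φ) ∐ₙ Xₙ →π X → (∐ₙ Xₙ)[1], where 1−φ is the morphism whose n-th component is ιₙ − φₙ ≫ ιₙ₊₁ (ιₙ denoting the coproduct inclusions). If C is a compact object of T, then the canonical map colimₙ Hom(C, Xₙ) → Hom(C, X), induced by the composites Xₙ → ∐ₙ Xₙ →π X, is a bijection. -/

import Mathlib

universe w v u

open CategoryTheory CategoryTheory.Limits CategoryTheory.Pretriangulated Opposite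

noncomputable section

variable {T : Type u} [Category.{v} T] [Preadditive T] [HasZeroObject T] [HasShift T ℤ]
  [∀ n : ℤ, (shiftFunctor T n).Additive] [Pretriangulated T] [HasCountableCoproducts T]

/-- An object `C` of `T` is compact if for every family `(Yᵢ)` of objects admitting a
coproduct, the canonical map `⊕ᵢ Hom(C, Yᵢ) → Hom(C, ∐ᵢ Yᵢ)` is bijective. -/
def IsCompactObject (C : T) : Prop :=
  ∀ (ι : Type w) (_ : DecidableEq ι) (Y : ι → T) (_ : HasCoproduct Y),
    Function.Bijective
      ⇑(DirectSum.toAddMonoid (fun i => Preadditive.rightComp C (Sigma.ι Y i)))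

variable {Xs : ℕ → T}

lemma statement5_vanish (φ : ∀ n, Xs n ⟶ Xs (n + 1)) {X : T} {π : (∐ Xs) ⟶ X}
    {δ : X ⟶ (∐ Xs)⟦(1 : ℤ)⟧}
    (hT : Triangle.mk (Sigma.desc (fun n => Sigma.ι Xs n - φ n ≫ Sigma.ι Xs (n + 1))) π δ ∈
      (distTriang T)) (n : ℕ) :
    Sigma.ι Xs n ≫ π = φ n ≫ Sigma.ι Xs (n + 1) ≫ π := by
  have h0 : Sigma.desc (fun n => Sigma.ι Xs n - φ n ≫ Sigma.ι Xs (n + 1)) ≫ π = 0 :=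
    comp_distTriang_mor_zero₁₂ _ hT
  have h1 : (Sigma.ι Xs n ≫ Sigma.desc (fun n => Sigma.ι Xs n - φ n ≫ Sigma.ι Xs (n + 1))) ≫ π
      = 0 := by rw [Category.assoc, h0, comp_zero]
  rw [Sigma.ι_desc, Preadditive.sub_comp] at h1
  rw [sub_eq_zero] at h1
  simpa using h1

/-- The cocone on `n ↦ Hom(C, Xₙ)` with apex `Hom(C, X)` induced by the morphisms
`Xₙ → ∐ₙ Xₙ → X`. -/
def statement5Cocone (C : T) (φ : ∀ n, Xs n ⟶ Xs (n + 1)) {X : T} (π : (∐ Xs) ⟶ X)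
    (h : ∀ n, Sigma.ι Xs n ≫ π = φ n ≫ Sigma.ι Xs (n + 1) ≫ π) :
    Cocone (Functor.ofSequence φ ⋙ coyoneda.obj (op C)) where
  pt := C ⟶ X
  ι :=
    { app := fun n => TypeCat.ofHom (fun g => g ≫ Sigma.ι Xs n ≫ π)
      naturality := by
        have key : ∀ (n m : ℕ) (hnm : n ≤ m),
            (Functor.ofSequence φ).map (homOfLE hnm) ≫ Sigma.ι Xs m ≫ π =
              Sigma.ι Xs n ≫ π := by
          intro n m hnm
          induction m, hnm using Nat.le_induction with
          | base => simp; rfl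
          | succ m hnm ih =>
            have hco : (homOfLE (Nat.le_succ_of_le hnm) : (n : ℕ) ⟶ (m + 1 : ℕ)) =
                homOfLE hnm ≫ homOfLE (Nat.le_add_right m 1) := rfl
            rw [hco, Functor.map_comp, Category.assoc, Functor.ofSequence_map_homOfLE_succ]
            erw [← h m, ih]
        intro n m f
        ext g
        have : f = homOfLE (leOfHom f) := rfl
        dsimp
        rw [Category.assoc, this, key n m (leOfHom f)]
        rfl }

namespace Statement5Helpers

lemma rightComp_apply {P Q R : T} (g : Q ⟶ R) (f : P ⟶ Q) :
    Preadditive.rightComp P g f = f ≫ g := rfl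

section Transport

variable (C : T) {ι κ : Type*} [DecidableEq ι] [DecidableEq κ] (e : ι ≃ κ) (Y : κ → T)

/-- Reindexing map on direct sums of Hom groups. -/
def transportHom : DirectSum ι (fun i => (C ⟶ (Y ∘ ⇑e) i)) →+ DirectSum κ (fun k => (C ⟶ Y k)) :=
  DirectSum.toAddMonoid (fun i => DirectSum.of (fun k => (C ⟶ Y k)) (e i))

lemma transportHom_of (i : ι) (a : C ⟶ Y (e i)) :
    transportHom C e Y (DirectSum.of _ i a) = DirectSum.of (fun k => (C ⟶ Y k)) (e i) a :=
  DirectSum.toAddMonoid_of _ _ _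

lemma transportHom_apply_e (y : DirectSum ι (fun i => (C ⟶ (Y ∘ ⇑e) i))) (i : ι) :
    (transportHom C e Y y) (e i) = y i := by
  induction y using DirectSum.induction_on with
  | zero => rw [map_zero, DFinsupp.zero_apply, DFinsupp.zero_apply]
  | of j a =>
      rw [transportHom_of]
      by_cases h : j = i
      · subst h; rw [DirectSum.of_eq_same, DirectSum.of_eq_same]
      · rw [DirectSum.of_eq_of_ne _ _ _ (fun he => h (e.injective he).symm),
          DirectSum.of_eq_of_ne _ _ _ (Ne.symm h)]
  | add x y hx hy =>
      rw [map_add, DirectSum.add_apply, DirectSum.add_apply, hx, hy]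

lemma transportHom_surjective : Function.Surjective ⇑(transportHom C e Y) := by
  intro x
  induction x using DirectSum.induction_on with
  | zero => exact ⟨0, map_zero _⟩
  | of k a =>
      obtain ⟨i, rfl⟩ : ∃ i, e i = k := ⟨e.symm k, e.apply_symm_apply k⟩
      exact ⟨DirectSum.of _ i a, transportHom_of C e Y i a⟩
  | add x y hx hy =>
      obtain ⟨u, rfl⟩ := hx
      obtain ⟨v, rfl⟩ := hy
      exact ⟨u + v, map_add _ _ _⟩

end Transport

section Sequence

variable (C : T) (Y : ℕ → T) [HasCoproduct Y]

/-- The canonical map `⊕ₙ Hom(C, Yₙ) →+ Hom(C, ∐ Y)`. -/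
def Phi : DirectSum ℕ (fun n => (C ⟶ Y n)) →+ (C ⟶ ∐ Y) :=
  DirectSum.toAddMonoid (fun n => Preadditive.rightComp C (Sigma.ι Y n))

lemma Phi_of (n : ℕ) (a : C ⟶ Y n) :
    Phi C Y (DirectSum.of _ n a) = a ≫ Sigma.ι Y n :=
  DirectSum.toAddMonoid_of _ _ _

lemma bijective_transport {ι : Type*} [DecidableEq ι] (e : ι ≃ ℕ)
    [HasCoproduct (Y ∘ ⇑e)]
    (h : Function.Bijective
      ⇑(DirectSum.toAddMonoid (fun i => Preadditive.rightComp C (Sigma.ι (Y ∘ ⇑e) i)))) :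
    Function.Bijective ⇑(Phi C Y) := by
  have compat : ∀ y, Phi C Y (transportHom C e Y y) =
      DirectSum.toAddMonoid (fun i => Preadditive.rightComp C (Sigma.ι (Y ∘ ⇑e) i)) y ≫
        (Sigma.reindex e Y).hom := by
    intro y
    induction y using DirectSum.induction_on with
    | zero => rw [map_zero, map_zero, map_zero, zero_comp]
    | of i a =>
        rw [transportHom_of, Phi_of, DirectSum.toAddMonoid_of, rightComp_apply,
          Category.assoc, Sigma.ι_reindex_hom]
    | add x y hx hy =>
        rw [map_add, map_add, map_add, hx, hy, Preadditive.add_comp]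
  constructor
  · intro x x' hxx
    obtain ⟨y, rfl⟩ := transportHom_surjective C e Y x
    obtain ⟨y', rfl⟩ := transportHom_surjective C e Y x'
    rw [compat, compat] at hxx
    rw [h.1 ((cancel_mono (Sigma.reindex e Y).hom).1 hxx)]
  · intro u
    obtain ⟨y, hy⟩ := h.2 (u ≫ (Sigma.reindex e Y).inv)
    refine ⟨transportHom C e Y y, ?_⟩
    rw [compat, hy, Category.assoc, Iso.inv_hom_id, Category.comp_id]

variable {C} in
lemma bij_Phi (hC : IsCompactObject.{w} C) : Function.Bijective ⇑(Phi C Y) :=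
  bijective_transport C Y (Equiv.ulift : ULift.{w} ℕ ≃ ℕ)
    (hC (ULift.{w} ℕ) inferInstance _ inferInstance)

variable (ψ : ∀ n, Y n ⟶ Y (n + 1))

/-- The "shift" map on the direct sum of Hom groups. -/
def SS : DirectSum ℕ (fun n => (C ⟶ Y n)) →+ DirectSum ℕ (fun n => (C ⟶ Y n)) :=
  DirectSum.toAddMonoid (fun n =>
    (DirectSum.of (fun m => (C ⟶ Y m)) (n + 1)).comp (Preadditive.rightComp C (ψ n)))

lemma SS_of (n : ℕ) (a : C ⟶ Y n) :
    SS C Y ψ (DirectSum.of _ n a) = DirectSum.of (fun m => (C ⟶ Y m)) (n + 1) (a ≫ ψ n) :=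
  DirectSum.toAddMonoid_of _ _ _

lemma Phi_comp_d (x : DirectSum ℕ (fun n => (C ⟶ Y n))) :
    Phi C Y x ≫ Sigma.desc (fun n => Sigma.ι Y n - ψ n ≫ Sigma.ι Y (n + 1)) =
      Phi C Y (x - SS C Y ψ x) := by
  induction x using DirectSum.induction_on with
  | zero => rw [map_zero, zero_comp, map_zero, sub_zero, map_zero]
  | of n a =>
      rw [SS_of, map_sub, Phi_of, Phi_of]
      simp only [Category.assoc]
      rw [Sigma.ι_desc, Preadditive.comp_sub]
  | add x y hx hy =>
      have habel : (x - SS C Y ψ x) + (y - SS C Y ψ y) = x + y - SS C Y ψ (x + y) := by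
        rw [map_add]; abel
      rw [map_add, Preadditive.add_comp, hx, hy, ← map_add, habel]

lemma SS_apply_zero (x : DirectSum ℕ (fun n => (C ⟶ Y n))) : (SS C Y ψ x) 0 = 0 := by
  induction x using DirectSum.induction_on with
  | zero => rw [map_zero]; exact DFinsupp.zero_apply _
  | of n a => rw [SS_of, DirectSum.of_eq_of_ne _ _ _ (by omega)]
  | add x y hx hy => rw [map_add, DirectSum.add_apply, hx, hy, add_zero]

lemma SS_apply_succ (x : DirectSum ℕ (fun n => (C ⟶ Y n))) (n : ℕ) :
    (SS C Y ψ x) (n + 1) = x n ≫ ψ n := by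
  induction x using DirectSum.induction_on with
  | zero => rw [map_zero, DFinsupp.zero_apply, DFinsupp.zero_apply, zero_comp]
  | of m a =>
      rw [SS_of]
      by_cases h : m = n
      · subst h; rw [DirectSum.of_eq_same, DirectSum.of_eq_same]
      · rw [DirectSum.of_eq_of_ne _ _ _ (by omega), DirectSum.of_eq_of_ne _ _ _ (Ne.symm h), zero_comp]
  | add x y hx hy =>
      rw [map_add, DirectSum.add_apply, DirectSum.add_apply, hx, hy, Preadditive.add_comp]

lemma eq_zero_of_fixed {x : DirectSum ℕ (fun n => (C ⟶ Y n))} (h : x = SS C Y ψ x) :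
    x = 0 := by
  have key : ∀ n, x n = 0 := by
    intro n
    induction n with
    | zero => rw [h, SS_apply_zero]
    | succ n ih => rw [h, SS_apply_succ, ih, zero_comp]
  exact DFunLike.ext _ _ fun n => (key n).trans rfl

variable {C Y ψ} in
lemma comp_desc_eq_zero (hbij : Function.Bijective ⇑(Phi C Y)) {u : C ⟶ ∐ Y}
    (hu : u ≫ Sigma.desc (fun n => Sigma.ι Y n - ψ n ≫ Sigma.ι Y (n + 1)) = 0) : u = 0 := by
  obtain ⟨x, rfl⟩ := hbij.2 u
  rw [Phi_comp_d] at hu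
  have h0 : x - SS C Y ψ x = 0 := hbij.1 (by rw [hu, map_zero])
  have hfix : x = SS C Y ψ x := by rwa [sub_eq_zero] at h0
  rw [eq_zero_of_fixed C Y ψ hfix, map_zero]

/-- Partial-sum evaluation map. -/
def Psi (N : ℕ) : DirectSum ℕ (fun n => (C ⟶ Y n)) →+ (C ⟶ Y N) :=
  DirectSum.toAddMonoid (fun i =>
    if h : i ≤ N then Preadditive.rightComp C ((Functor.ofSequence ψ).map (homOfLE h)) else 0)

lemma Psi_of_le {N i : ℕ} (h : i ≤ N) (a : C ⟶ Y i) :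
    Psi C Y ψ N (DirectSum.of _ i a) = a ≫ (Functor.ofSequence ψ).map (homOfLE h) := by
  unfold Psi
  rw [DirectSum.toAddMonoid_of, dif_pos h]
  rfl

lemma Psi_of_not_le {N i : ℕ} (h : ¬ i ≤ N) (a : C ⟶ Y i) :
    Psi C Y ψ N (DirectSum.of _ i a) = 0 := by
  unfold Psi
  rw [DirectSum.toAddMonoid_of, dif_neg h]
  rfl

lemma ofSequence_step (i N : ℕ) (h : i + 1 ≤ N) :
    (Functor.ofSequence ψ).map (homOfLE (Nat.le_of_succ_le h)) =
      ψ i ≫ (Functor.ofSequence ψ).map (homOfLE h) := by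
  have hc : (homOfLE (Nat.le_of_succ_le h) : (i : ℕ) ⟶ N) = homOfLE (Nat.le_succ i) ≫ homOfLE h := rfl
  rw [hc, Functor.map_comp]
  erw [Functor.ofSequence_map_homOfLE_succ]
  rfl

lemma Psi_sub_SS (N : ℕ) (x : DirectSum ℕ (fun n => (C ⟶ Y n))) :
    Psi C Y ψ N (x - SS C Y ψ x) = x N := by
  rw [map_sub]
  induction x using DirectSum.induction_on with
  | zero => simp only [map_zero, sub_zero]; rfl
  | of i a =>
      rw [SS_of]
      by_cases h2 : i + 1 ≤ N
      · rw [Psi_of_le C Y ψ (Nat.le_of_succ_le h2), Psi_of_le C Y ψ h2,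
          DirectSum.of_eq_of_ne _ _ _ (by omega), ofSequence_step Y ψ i N h2]
        exact sub_eq_zero.2 (Category.assoc _ _ _).symm
      · by_cases h1 : i ≤ N
        · have hiN : i = N := by omega
          subst hiN
          rw [Psi_of_le C Y ψ h1, Psi_of_not_le C Y ψ h2]
          erw [sub_zero, DirectSum.of_eq_same]
          have hid : (homOfLE h1 : (i : ℕ) ⟶ i) = 𝟙 i := rfl
          erw [hid, CategoryTheory.Functor.map_id]
          exact Category.comp_id a
        · rw [Psi_of_not_le C Y ψ h1, Psi_of_not_le C Y ψ h2, sub_zero,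
            DirectSum.of_eq_of_ne _ _ _ (by omega)]
  | add x y hx hy =>
      rw [map_add, map_add, map_add, DirectSum.add_apply, ← hx, ← hy]
      abel

lemma exists_bound (x : DirectSum ℕ (fun n => (C ⟶ Y n))) :
    ∃ N, ∀ n, N ≤ n → x n = 0 := by
  induction x using DirectSum.induction_on with
  | zero => exact ⟨0, fun n _ => rfl⟩
  | of i a => exact ⟨i + 1, fun n hn => DirectSum.of_eq_of_ne _ _ _ (by omega)⟩
  | add x y hx hy =>
      obtain ⟨N₁, h₁⟩ := hx
      obtain ⟨N₂, h₂⟩ := hy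
      exact ⟨max N₁ N₂, fun n hn => by
        rw [DirectSum.add_apply, h₁ n (le_trans (le_max_left _ _) hn),
          h₂ n (le_trans (le_max_right _ _) hn), add_zero]⟩

variable {C Y ψ} in
lemma exists_rep {X' : T} (π' : (∐ Y) ⟶ X')
    (hvan : ∀ (n m : ℕ) (h : n ≤ m), Sigma.ι Y n ≫ π' =
      (Functor.ofSequence ψ).map (homOfLE h) ≫ Sigma.ι Y m ≫ π')
    (x : DirectSum ℕ (fun n => (C ⟶ Y n))) :
    ∃ (N : ℕ) (gN : C ⟶ Y N), Phi C Y x ≫ π' = gN ≫ Sigma.ι Y N ≫ π' := by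
  induction x using DirectSum.induction_on with
  | zero => exact ⟨0, 0, by rw [map_zero, zero_comp, zero_comp]⟩
  | of i a => exact ⟨i, a, by rw [Phi_of, Category.assoc]⟩
  | add x y hx hy =>
      obtain ⟨N₁, g₁, h₁⟩ := hx
      obtain ⟨N₂, g₂, h₂⟩ := hy
      refine ⟨max N₁ N₂,
        g₁ ≫ (Functor.ofSequence ψ).map (homOfLE (le_max_left N₁ N₂)) +
        g₂ ≫ (Functor.ofSequence ψ).map (homOfLE (le_max_right N₁ N₂)), ?_⟩
      rw [map_add, Preadditive.add_comp, h₁, h₂]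
      erw [Preadditive.add_comp]
      erw [Category.assoc, Category.assoc]
      erw [← hvan N₁ _ (le_max_left N₁ N₂), ← hvan N₂ _ (le_max_right N₁ N₂)]

variable {C Y ψ} in
lemma comp_shift_desc_eq_zero (hC : IsCompactObject.{w} C)
    (v : C ⟶ (∐ Y)⟦(1 : ℤ)⟧)
    (hv : v ≫ (Sigma.desc (fun n => Sigma.ι Y n - ψ n ≫ Sigma.ι Y (n + 1)))⟦(1 : ℤ)⟧' = 0) :
    v = 0 := by
  have hcomm : Sigma.desc (fun n => Sigma.ι (fun m => (shiftFunctor T (1 : ℤ)).obj (Y m)) n -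
        (shiftFunctor T (1 : ℤ)).map (ψ n) ≫
          Sigma.ι (fun m => (shiftFunctor T (1 : ℤ)).obj (Y m)) (n + 1)) ≫
        sigmaComparison (shiftFunctor T (1 : ℤ)) Y =
      sigmaComparison (shiftFunctor T (1 : ℤ)) Y ≫
        (shiftFunctor T (1 : ℤ)).map
          (Sigma.desc (fun n => Sigma.ι Y n - ψ n ≫ Sigma.ι Y (n + 1))) := by
    apply Sigma.hom_ext
    intro n
    rw [← Category.assoc, Sigma.ι_desc, Preadditive.sub_comp, Category.assoc,
      ι_comp_sigmaComparison, ι_comp_sigmaComparison, ← Category.assoc,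
      ι_comp_sigmaComparison, ← Functor.map_comp, ← Functor.map_comp, ← Functor.map_sub,
      Sigma.ι_desc]
  have h1 : ((v ≫ inv (sigmaComparison (shiftFunctor T (1 : ℤ)) Y)) ≫
      Sigma.desc (fun n => Sigma.ι (fun m => (shiftFunctor T (1 : ℤ)).obj (Y m)) n -
        (shiftFunctor T (1 : ℤ)).map (ψ n) ≫
          Sigma.ι (fun m => (shiftFunctor T (1 : ℤ)).obj (Y m)) (n + 1))) ≫
      sigmaComparison (shiftFunctor T (1 : ℤ)) Y = 0 := by
    rw [Category.assoc, Category.assoc, hcomm,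
      ← Category.assoc (inv (sigmaComparison (shiftFunctor T (1 : ℤ)) Y)),
      IsIso.inv_hom_id, Category.id_comp]
    exact hv
  have h2 : (v ≫ inv (sigmaComparison (shiftFunctor T (1 : ℤ)) Y)) ≫
      Sigma.desc (fun n => Sigma.ι (fun m => (shiftFunctor T (1 : ℤ)).obj (Y m)) n -
        (shiftFunctor T (1 : ℤ)).map (ψ n) ≫
          Sigma.ι (fun m => (shiftFunctor T (1 : ℤ)).obj (Y m)) (n + 1)) = 0 :=
    (cancel_mono (sigmaComparison (shiftFunctor T (1 : ℤ)) Y)).1 (by rw [h1, zero_comp])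
  have h3 : v ≫ inv (sigmaComparison (shiftFunctor T (1 : ℤ)) Y) = 0 :=
    comp_desc_eq_zero (bij_Phi (fun n => (shiftFunctor T (1 : ℤ)).obj (Y n)) hC) h2
  have h4 : v = (v ≫ inv (sigmaComparison (shiftFunctor T (1 : ℤ)) Y)) ≫
      sigmaComparison (shiftFunctor T (1 : ℤ)) Y := by
    rw [Category.assoc, IsIso.inv_hom_id, Category.comp_id]
  rw [h4, h3, zero_comp]

end Sequence

end Statement5Helpers

/-- if `X` is a homotopy colimit of the sequence `(Xₙ)` and `C` is compact, then
the canonical map `colimₙ Hom(C, Xₙ) → Hom(C, X)` is bijective. -/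
theorem statement_5 (Xs : ℕ → T) (φ : ∀ n, Xs n ⟶ Xs (n + 1)) (X : T)
    (π : (∐ Xs) ⟶ X) (δ : X ⟶ (∐ Xs)⟦(1 : ℤ)⟧)
    (hT : Triangle.mk (Sigma.desc (fun n => Sigma.ι Xs n - φ n ≫ Sigma.ι Xs (n + 1))) π δ ∈
      (distTriang T))
    (C : T) (hC : IsCompactObject.{w} C) :
    Function.Bijective
      (colimit.desc (Functor.ofSequence φ ⋙ coyoneda.obj (op C))
        (statement5Cocone C φ π (statement5_vanish φ hT))) := by
  have hvan := statement5_vanish φ hT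
  have bijX := Statement5Helpers.bij_Phi Xs hC
  have key : ∀ (n m : ℕ) (hnm : n ≤ m),
      Sigma.ι Xs n ≫ π = (Functor.ofSequence φ).map (homOfLE hnm) ≫ Sigma.ι Xs m ≫ π := by
    intro n m hnm
    induction m, hnm using Nat.le_induction with
    | base => simp; rfl
    | succ m hnm ih =>
        have hco : (homOfLE (Nat.le_succ_of_le hnm) : (n : ℕ) ⟶ (m + 1 : ℕ)) =
            homOfLE hnm ≫ homOfLE (Nat.le_add_right m 1) := rfl
        rw [hco, Functor.map_comp, Category.assoc, Functor.ofSequence_map_homOfLE_succ]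
        erw [← hvan m, ← ih]
  have heval : ∀ (j : ℕ) (y : C ⟶ Xs j),
      colimit.desc (Functor.ofSequence φ ⋙ coyoneda.obj (op C))
        (statement5Cocone C φ π (statement5_vanish φ hT))
        (colimit.ι (Functor.ofSequence φ ⋙ coyoneda.obj (op C)) j y) =
      y ≫ Sigma.ι Xs j ≫ π :=
    fun j y =>
      ConcreteCategory.congr_hom (colimit.ι_desc (statement5Cocone C φ π (statement5_vanish φ hT)) j) y
  constructor
  · -- injectivity
    intro e₁ e₂ h
    obtain ⟨n₁, f₁, rfl⟩ := Types.jointly_surjective' e₁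
    obtain ⟨n₂, f₂, rfl⟩ := Types.jointly_surjective' e₂
    have step₁ : colimit.ι (Functor.ofSequence φ ⋙ coyoneda.obj (op C)) n₁ f₁ =
        colimit.ι (Functor.ofSequence φ ⋙ coyoneda.obj (op C)) (max n₁ n₂)
          (f₁ ≫ (Functor.ofSequence φ).map (homOfLE (le_max_left n₁ n₂))) :=
      Types.colimit_sound (homOfLE (le_max_left n₁ n₂)) rfl
    have step₂ : colimit.ι (Functor.ofSequence φ ⋙ coyoneda.obj (op C)) n₂ f₂ =
        colimit.ι (Functor.ofSequence φ ⋙ coyoneda.obj (op C)) (max n₁ n₂)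
          (f₂ ≫ (Functor.ofSequence φ).map (homOfLE (le_max_right n₁ n₂))) :=
      Types.colimit_sound (homOfLE (le_max_right n₁ n₂)) rfl
    rw [step₁, step₂] at h ⊢
    set N := max n₁ n₂ with hN
    set g₁ : C ⟶ Xs N := f₁ ≫ (Functor.ofSequence φ).map (homOfLE (le_max_left n₁ n₂))
      with hg₁
    set g₂ : C ⟶ Xs N := f₂ ≫ (Functor.ofSequence φ).map (homOfLE (le_max_right n₁ n₂))
      with hg₂
    have hg : g₁ ≫ Sigma.ι Xs N ≫ π = g₂ ≫ Sigma.ι Xs N ≫ π :=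
      (heval N g₁).symm.trans (h.trans (heval N g₂))
    have hsub : ((g₁ - g₂) ≫ Sigma.ι Xs N) ≫ π = 0 := by
      rw [Category.assoc, Preadditive.sub_comp, hg, sub_self]
    obtain ⟨w, hw⟩ := Triangle.coyoneda_exact₂ _ hT ((g₁ - g₂) ≫ Sigma.ι Xs N) hsub
    obtain ⟨x, rfl⟩ := bijX.2 w
    have hw' : Statement5Helpers.Phi C Xs (DirectSum.of _ N (g₁ - g₂)) =
        Statement5Helpers.Phi C Xs (x - Statement5Helpers.SS C Xs φ x) := by
      rw [Statement5Helpers.Phi_of, ← Statement5Helpers.Phi_comp_d]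
      exact hw
    have hx := bijX.1 hw'
    obtain ⟨M₀, hM₀⟩ := Statement5Helpers.exists_bound C Xs x
    have hPsi := congrArg (⇑(Statement5Helpers.Psi C Xs φ (max N M₀))) hx
    rw [Statement5Helpers.Psi_sub_SS, hM₀ (max N M₀) (le_max_right _ _),
      Statement5Helpers.Psi_of_le C Xs φ (le_max_left N M₀)] at hPsi
    have hgm : g₁ ≫ (Functor.ofSequence φ).map (homOfLE (le_max_left N M₀)) =
        g₂ ≫ (Functor.ofSequence φ).map (homOfLE (le_max_left N M₀)) := by
      rw [← sub_eq_zero]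
      erw [← Preadditive.sub_comp]
      exact hPsi
    have p₁ : colimit.ι (Functor.ofSequence φ ⋙ coyoneda.obj (op C)) N g₁ =
        colimit.ι (Functor.ofSequence φ ⋙ coyoneda.obj (op C)) (max N M₀)
          (g₁ ≫ (Functor.ofSequence φ).map (homOfLE (le_max_left N M₀))) :=
      Types.colimit_sound (homOfLE (le_max_left N M₀)) rfl
    have p₂ : colimit.ι (Functor.ofSequence φ ⋙ coyoneda.obj (op C)) N g₂ =
        colimit.ι (Functor.ofSequence φ ⋙ coyoneda.obj (op C)) (max N M₀)
          (g₂ ≫ (Functor.ofSequence φ).map (homOfLE (le_max_left N M₀))) :=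
      Types.colimit_sound (homOfLE (le_max_left N M₀)) rfl
    rw [hgm] at p₁
    exact p₁.trans p₂.symm
  · -- surjectivity
    intro g
    have h31 : δ ≫ (Sigma.desc (fun n => Sigma.ι Xs n - φ n ≫
        Sigma.ι Xs (n + 1)))⟦(1 : ℤ)⟧' = 0 := comp_distTriang_mor_zero₃₁ _ hT
    have hδg : g ≫ δ = 0 := by
      refine Statement5Helpers.comp_shift_desc_eq_zero (ψ := φ) hC (g ≫ δ) ?_
      erw [Category.assoc, h31, comp_zero]
    obtain ⟨w, hwg⟩ := Triangle.coyoneda_exact₃ _ hT g hδg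
    obtain ⟨x, rfl⟩ := bijX.2 w
    obtain ⟨N, gN, hgN⟩ := Statement5Helpers.exists_rep π key x
    refine ⟨colimit.ι (Functor.ofSequence φ ⋙ coyoneda.obj (op C)) N gN, ?_⟩
    exact (heval N gN).trans (hgN.symm.trans hwg.symm)

end
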